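/- arXiv:1901.08186 — 2 statements merged into one kernel-verified Lean document; each statement's English description precedes it below -/
import Mathlib

section
/- Let K be an invertible self-dual ℓ×ℓ matrix over F_2. Then for every i with 1 ≤ i ≤ ℓ and every w with 0 ≤ w ≤ ℓ, E_{i,w} + E_{ℓ+1-i, ℓ-w} ≤ binom(ℓ, w). -/
/-- The support of a vector over `ZMod 2`. -/
def supp {ℓ : ℕ} (v : Fin ℓ → ZMod 2) : Set (Fin ℓ) := {j | v j ≠ 0}

/-- The Hamming weight of a vector over `ZMod 2`. -/
def wt {ℓ : ℕ} (v : Fin ℓ → ZMod 2) : ℕ :=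
  (Finset.univ.filter fun j => v j ≠ 0).card

/-- The kernel code `C_i`: the span of the rows `g_{i+1}, …, g_ℓ` of `K`
(rows of index `≥ i` in 0-based indexing). -/
def kernelCode {ℓ : ℕ} (K : Matrix (Fin ℓ) (Fin ℓ) (ZMod 2)) (i : ℕ) :
    Submodule (ZMod 2) (Fin ℓ → ZMod 2) :=
  Submodule.span (ZMod 2) {v | ∃ r : Fin ℓ, i ≤ (r : ℕ) ∧ v = K r}

/-- `e` is an uncorrectable erasure pattern for the bit-channel of (0-based) index `i`. -/
def Uncorrectable {ℓ : ℕ} (K : Matrix (Fin ℓ) (Fin ℓ) (ZMod 2)) (i : Fin ℓ)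
    (e : Fin ℓ → ZMod 2) : Prop :=
  ∃ u' u'' : Fin ℓ → ZMod 2,
    (∀ j, j < i → u' j = u'' j) ∧ u' i ≠ u'' i ∧
      ∀ j, e j = 0 → Matrix.vecMul u' K j = Matrix.vecMul u'' K j

/-- `E_{i,w}`: the number of uncorrectable erasure patterns of weight `w`
for bit-channel `i`. -/
noncomputable def Ecount {ℓ : ℕ} (K : Matrix (Fin ℓ) (Fin ℓ) (ZMod 2)) (i : Fin ℓ)
    (w : ℕ) : ℕ :=
  Nat.card {e : Fin ℓ → ZMod 2 // Uncorrectable K i e ∧ wt e = w}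

/-- `f_i(z) = ∑_{w=0}^{ℓ} E_{i,w} z^w (1-z)^{ℓ-w}`. -/
noncomputable def fpoly {ℓ : ℕ} (K : Matrix (Fin ℓ) (Fin ℓ) (ZMod 2)) (i : Fin ℓ)
    (z : ℝ) : ℝ :=
  ∑ w ∈ Finset.range (ℓ + 1), (Ecount K i w : ℝ) * z ^ w * (1 - z) ^ (ℓ - w)

/-- Dual code with respect to the standard bilinear form `⟨u,v⟩ = ∑ j, u j * v j`. -/
def dualCode {ℓ : ℕ} (C : Submodule (ZMod 2) (Fin ℓ → ZMod 2)) :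
    Submodule (ZMod 2) (Fin ℓ → ZMod 2) where
  carrier := {v | ∀ c ∈ C, ∑ j, v j * c j = 0}
  add_mem' := by
    intro a b ha hb c hc
    simpa [add_mul, Finset.sum_add_distrib] using by rw [ha c hc, hb c hc]; simp
  zero_mem' := by intro c hc; simp
  smul_mem' := by
    intro r a ha c hc
    simp only [Pi.smul_apply, smul_eq_mul, mul_assoc, ← Finset.mul_sum, Set.mem_setOf_eq]
    rw [ha c hc, mul_zero]

/-- `K` is self-dual if `C_i = C_{ℓ-i}^⊥` for all `0 ≤ i ≤ ℓ`. -/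
def SelfDual {ℓ : ℕ} (K : Matrix (Fin ℓ) (Fin ℓ) (ZMod 2)) : Prop :=
  ∀ i ≤ ℓ, kernelCode K i = dualCode (kernelCode K (ℓ - i))


section Aux
open Finset

attribute [local instance] Classical.propDecidable

variable {ℓ : ℕ}

lemma zmod2_eq_one {a : ZMod 2} (h : a ≠ 0) : a = 1 := by
  fin_cases a
  · exact absurd rfl h
  · rfl

lemma mem_dualCode {C : Submodule (ZMod 2) (Fin ℓ → ZMod 2)} {v : Fin ℓ → ZMod 2} :
    v ∈ dualCode C ↔ ∀ c ∈ C, ∑ j, v j * c j = 0 := Iff.rfl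

lemma mem_dualCode_span {S : Set (Fin ℓ → ZMod 2)} {v : Fin ℓ → ZMod 2}
    (h : ∀ x ∈ S, ∑ j, v j * x j = 0) : v ∈ dualCode (Submodule.span (ZMod 2) S) := by
  intro c hc
  induction hc using Submodule.span_induction with
  | mem x hx => exact h x hx
  | zero => simp
  | add x y _ _ hx hy => simp [Pi.add_apply, mul_add, Finset.sum_add_distrib, hx, hy]
  | smul a x _ hx =>
      simp only [Pi.smul_apply, smul_eq_mul, mul_left_comm, ← Finset.mul_sum, hx, mul_zero]

lemma kernelCode_eq_span_image (K : Matrix (Fin ℓ) (Fin ℓ) (ZMod 2)) (i : ℕ) :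
    kernelCode K i = Submodule.span (ZMod 2) ((fun r => K r) '' {r : Fin ℓ | i ≤ (r : ℕ)}) := by
  unfold kernelCode
  congr 1
  ext v
  constructor
  · rintro ⟨r, hr, rfl⟩; exact ⟨r, hr, rfl⟩
  · rintro ⟨r, hr, rfl⟩; exact ⟨r, hr, rfl⟩

lemma row_mem_kernelCode (K : Matrix (Fin ℓ) (Fin ℓ) (ZMod 2)) {i : ℕ} {r : Fin ℓ}
    (h : i ≤ (r : ℕ)) : K r ∈ kernelCode K i :=
  Submodule.subset_span ⟨r, h, rfl⟩

lemma vecMul_eq_sum (K : Matrix (Fin ℓ) (Fin ℓ) (ZMod 2)) (d : Fin ℓ → ZMod 2) :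
    Matrix.vecMul d K = ∑ r, d r • K r := by
  funext j
  simp [Matrix.vecMul, dotProduct]

lemma vecMul_mem_kernelCode (K : Matrix (Fin ℓ) (Fin ℓ) (ZMod 2)) (i : ℕ)
    (d : Fin ℓ → ZMod 2) (hd : ∀ r : Fin ℓ, (r : ℕ) < i → d r = 0) :
    Matrix.vecMul d K ∈ kernelCode K i := by
  rw [vecMul_eq_sum]
  refine Submodule.sum_mem _ fun r _ => ?_
  by_cases h : i ≤ (r : ℕ)
  · exact Submodule.smul_mem _ _ (row_mem_kernelCode K h)
  · rw [hd r (by omega)]; simp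

/-- reformulation of uncorrectability -/
lemma uncorrectable_iff (K : Matrix (Fin ℓ) (Fin ℓ) (ZMod 2)) (i : Fin ℓ)
    (e : Fin ℓ → ZMod 2) :
    Uncorrectable K i e ↔ ∃ d : Fin ℓ → ZMod 2,
      (∀ j, j < i → d j = 0) ∧ d i = 1 ∧
        ∀ j, e j = 0 → Matrix.vecMul d K j = 0 := by
  constructor
  · rintro ⟨u', u'', h1, h2, h3⟩
    refine ⟨u' - u'', fun j hj => by simp [h1 j hj], ?_, fun j hj => ?_⟩
    · exact zmod2_eq_one (sub_ne_zero_of_ne h2)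
    · rw [Matrix.sub_vecMul]
      simp [h3 j hj]
  · rintro ⟨d, h1, h2, h3⟩
    refine ⟨d, 0, fun j hj => by simp [h1 j hj], by simp [h2], fun j hj => ?_⟩
    simp [h3 j hj]

/-- the complement of an erasure pattern -/
def eCompl (e : Fin ℓ → ZMod 2) : Fin ℓ → ZMod 2 := fun j => e j + 1

lemma eCompl_eCompl (e : Fin ℓ → ZMod 2) : eCompl (eCompl e) = e := by
  funext j
  show e j + 1 + 1 = e j
  have h : (1 : ZMod 2) + 1 = 0 := by decide
  rw [add_assoc, h, add_zero]

lemma eCompl_eq_zero_iff (e : Fin ℓ → ZMod 2) (j : Fin ℓ) :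
    eCompl e j = 0 ↔ e j ≠ 0 := by
  unfold eCompl
  constructor
  · intro h h0; rw [h0] at h; simp at h
  · intro h; rw [zmod2_eq_one h]; decide

lemma wt_le (e : Fin ℓ → ZMod 2) : wt e ≤ ℓ := by
  unfold wt
  simpa using Finset.card_filter_le Finset.univ (fun j => e j ≠ 0)

lemma wt_eCompl (e : Fin ℓ → ZMod 2) : wt (eCompl e) = ℓ - wt e := by
  unfold wt
  have h1 : (Finset.univ.filter fun j => eCompl e j ≠ 0) =
      Finset.univ.filter fun j => ¬ (e j ≠ 0) := by
    apply Finset.filter_congr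
    intro j _
    exact not_congr (eCompl_eq_zero_iff e j)
  rw [h1]
  have h2 := Finset.card_filter_add_card_filter_not
    (s := (Finset.univ : Finset (Fin ℓ))) (p := fun j => e j ≠ 0)
  simp only [Finset.card_univ, Fintype.card_fin] at h2
  omega

/-- number of weight-w vectors -/
lemma card_wt_eq (ℓ w : ℕ) :
    ((Finset.univ : Finset (Fin ℓ → ZMod 2)).filter fun e => wt e = w).card = ℓ.choose w := by
  have hch : ℓ.choose w = (Finset.powersetCard w (Finset.univ : Finset (Fin ℓ))).card := by
    rw [Finset.card_powersetCard, Finset.card_univ, Fintype.card_fin]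
  rw [hch]
  refine Finset.card_bij' (fun e _ => Finset.univ.filter fun j => e j ≠ 0)
    (fun s _ => fun j => if j ∈ s then 1 else 0) ?_ ?_ ?_ ?_
  · intro e he
    simp only [Finset.mem_filter, Finset.mem_univ, true_and] at he
    rw [Finset.mem_powersetCard]
    exact ⟨Finset.subset_univ _, he⟩
  · intro s hs
    rw [Finset.mem_powersetCard] at hs
    simp only [Finset.mem_filter, Finset.mem_univ, true_and]
    rw [← hs.2]
    unfold wt
    congr 1
    ext j
    simp only [Finset.mem_filter, Finset.mem_univ, true_and]
    by_cases h : j ∈ s <;> simp [h]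
  · intro e he
    funext j
    show (if j ∈ Finset.univ.filter (fun j => e j ≠ 0) then (1 : ZMod 2) else 0) = e j
    by_cases h : e j ≠ 0
    · rw [if_pos (by simp [h])]
      exact (zmod2_eq_one h).symm
    · rw [if_neg (by simp [h])]
      exact (not_not.mp h).symm
  · intro s hs
    ext j
    simp only [Finset.mem_filter, Finset.mem_univ, true_and]
    by_cases h : j ∈ s <;> simp [h]

lemma ecount_eq_card (K : Matrix (Fin ℓ) (Fin ℓ) (ZMod 2)) (i : Fin ℓ) (w : ℕ) :
    Ecount K i w =
      ((Finset.univ : Finset (Fin ℓ → ZMod 2)).filter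
        fun e => Uncorrectable K i e ∧ wt e = w).card := by
  rw [Ecount, Nat.card_eq_fintype_card, Fintype.card_subtype]

/-- Core disjointness: e and its complement cannot both be uncorrectable for dual channels. -/
lemma not_both (K : Matrix (Fin ℓ) (Fin ℓ) (ZMod 2)) (hK : IsUnit K.det)
    (hsd : SelfDual K) (i : Fin ℓ) (e : Fin ℓ → ZMod 2)
    (h1 : Uncorrectable K i e) (h2 : Uncorrectable K i.rev (eCompl e)) : False := by
  obtain ⟨d, hd1, hd2, hd3⟩ := (uncorrectable_iff K i e).1 h1
  obtain ⟨d', hd'1, hd'2, hd'3⟩ := (uncorrectable_iff K i.rev (eCompl e)).1 h2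
  set m : ℕ := (i : ℕ) with hm
  have him : m < ℓ := i.isLt
  have hrev : ((i.rev : Fin ℓ) : ℕ) = ℓ - 1 - m := by rw [Fin.val_rev]; omega
  set c : Fin ℓ → ZMod 2 := Matrix.vecMul d K with hc
  set c' : Fin ℓ → ZMod 2 := Matrix.vecMul d' K with hc'
  -- orthogonality from disjoint supports
  have horth : ∑ j, c' j * c j = 0 := by
    apply Finset.sum_eq_zero
    intro j _
    by_cases hej : e j = 0
    · rw [hd3 j hej, mul_zero]
    · rw [hd'3 j ((eCompl_eq_zero_iff e j).2 hej), zero_mul]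
  -- decompose c = K i + z
  have hzmem : c - K i ∈ kernelCode K (m + 1) := by
    have heq : c - K i = Matrix.vecMul (d - Pi.single i 1) K := by
      rw [Matrix.sub_vecMul]
      congr 1
      funext j
      rw [vecMul_eq_sum, Finset.sum_apply, Finset.sum_eq_single i]
      · simp
      · intro r _ hr; simp [Pi.single_apply, hr]
      · simp
    rw [heq]
    apply vecMul_mem_kernelCode
    intro r hr
    by_cases hri : r = i
    · subst hri; simp [Pi.single_apply, hd2]
    · have hlt : r < i := by
        apply Fin.lt_def.2
        have : (r : ℕ) ≠ m := fun hh => hri (Fin.ext hh)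
        omega
      simp [Pi.single_apply, hri, hd1 r hlt]
  have hzmem' : c' - K i.rev ∈ kernelCode K (ℓ - m) := by
    have heq : c' - K i.rev = Matrix.vecMul (d' - Pi.single i.rev 1) K := by
      rw [Matrix.sub_vecMul]
      congr 1
      funext j
      rw [vecMul_eq_sum, Finset.sum_apply, Finset.sum_eq_single i.rev]
      · simp
      · intro r _ hr; simp [Pi.single_apply, hr]
      · simp
    rw [heq]
    apply vecMul_mem_kernelCode
    intro r hr
    by_cases hri : r = i.rev
    · subst hri; simp [Pi.single_apply, hd'2]
    · have hlt : r < i.rev := by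
        apply Fin.lt_def.2
        have hne : (r : ℕ) ≠ ((i.rev : Fin ℓ) : ℕ) := fun hh => hri (Fin.ext hh)
        rw [hrev] at hne ⊢
        omega
      simp [Pi.single_apply, hri, hd'1 r hlt]
  -- duality identities
  have hdual1 : kernelCode K (ℓ - 1 - m) = dualCode (kernelCode K (m + 1)) := by
    have h := hsd (ℓ - 1 - m) (by omega)
    rwa [show ℓ - (ℓ - 1 - m) = m + 1 by omega] at h
  have hdual2 : kernelCode K (ℓ - m) = dualCode (kernelCode K m) := by
    have h := hsd (ℓ - m) (by omega)
    rwa [show ℓ - (ℓ - m) = m by omega] at h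
  have hc'mem : c' ∈ kernelCode K (ℓ - 1 - m) := by
    rw [hc']
    apply vecMul_mem_kernelCode
    intro r hr
    apply hd'1
    apply Fin.lt_def.2
    rw [hrev]; omega
  have hc'dual : c' ∈ dualCode (kernelCode K (m + 1)) := hdual1 ▸ hc'mem
  -- key: ⟨c', K i⟩ = 0
  have hKi : ∑ j, c' j * K i j = 0 := by
    have hz := hc'dual _ hzmem
    simp only [Pi.sub_apply, mul_sub] at hz
    rw [Finset.sum_sub_distrib, horth, zero_sub, neg_eq_zero] at hz
    exact hz
  -- c' ⊥ every generator of kernelCode K m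
  have hc'dualm : c' ∈ dualCode (kernelCode K m) := by
    rw [kernelCode]
    apply mem_dualCode_span
    rintro x ⟨r, hr, rfl⟩
    by_cases hri : r = i
    · subst hri; exact hKi
    · have hr1 : m + 1 ≤ (r : ℕ) := by
        have : (r : ℕ) ≠ m := fun hh => hri (Fin.ext hh)
        omega
      exact hc'dual _ (row_mem_kernelCode K hr1)
  have hc'k : c' ∈ kernelCode K (ℓ - m) := hdual2 ▸ hc'dualm
  have hKrev : K i.rev ∈ kernelCode K (ℓ - m) := by
    have h := Submodule.sub_mem _ hc'k hzmem'
    rwa [sub_sub_cancel] at h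
  have hli : LinearIndependent (ZMod 2) (fun r : Fin ℓ => K r) :=
    Matrix.linearIndependent_rows_iff_isUnit.2 ((Matrix.isUnit_iff_isUnit_det K).2 hK)
  have hnotmem := hli.notMem_span_image (s := {r : Fin ℓ | ℓ - m ≤ (r : ℕ)})
    (x := i.rev) (by simp only [Set.mem_setOf_eq, hrev]; omega)
  rw [← kernelCode_eq_span_image] at hnotmem
  exact hnotmem hKrev

end Aux

/-- Duality lemma: for a self-dual kernel, `E_{i,w} + E_{ℓ+1-i,ℓ-w} ≤ binom(ℓ,w)`. -/
theorem duality_lemma {ℓ : ℕ} (hℓ : 0 < ℓ)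
    (K : Matrix (Fin ℓ) (Fin ℓ) (ZMod 2)) (hK : IsUnit K.det)
    (hsd : SelfDual K) (i : Fin ℓ) (w : ℕ) (hw : w ≤ ℓ) :
    Ecount K i w + Ecount K i.rev (ℓ - w) ≤ ℓ.choose w := by
  classical
  rw [ecount_eq_card, ecount_eq_card]
  have hcard :
      ((Finset.univ : Finset (Fin ℓ → ZMod 2)).filter
          fun e => Uncorrectable K i.rev e ∧ wt e = ℓ - w).card =
      ((Finset.univ : Finset (Fin ℓ → ZMod 2)).filter
          fun e => Uncorrectable K i.rev (eCompl e) ∧ wt e = w).card := by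
    refine Finset.card_bij' (fun e _ => eCompl e) (fun e _ => eCompl e) ?_ ?_ ?_ ?_
    · intro e he
      simp only [Finset.mem_filter, Finset.mem_univ, true_and] at he ⊢
      refine ⟨by rw [eCompl_eCompl]; exact he.1, ?_⟩
      rw [wt_eCompl, he.2]
      omega
    · intro e he
      simp only [Finset.mem_filter, Finset.mem_univ, true_and] at he ⊢
      exact ⟨he.1, by rw [wt_eCompl, he.2]⟩
    · intro e _; exact eCompl_eCompl e
    · intro e _; exact eCompl_eCompl e
  rw [hcard, ← card_wt_eq ℓ w]
  have hdisj : Disjoint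
      ((Finset.univ : Finset (Fin ℓ → ZMod 2)).filter
        fun e => Uncorrectable K i e ∧ wt e = w)
      ((Finset.univ : Finset (Fin ℓ → ZMod 2)).filter
        fun e => Uncorrectable K i.rev (eCompl e) ∧ wt e = w) := by
    rw [Finset.disjoint_left]
    intro e he1 he2
    simp only [Finset.mem_filter, Finset.mem_univ, true_and] at he1 he2
    exact not_both K hK hsd i e he1.1 he2.1
  rw [← Finset.card_union_of_disjoint hdisj]
  apply Finset.card_le_card
  apply Finset.union_subset <;>
    · intro e he
      simp only [Finset.mem_filter, Finset.mem_univ, true_and] at he ⊢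
      exact he.2
end

section
/- Let K be an invertible ℓ×ℓ matrix over F_2, fix i with 1 ≤ i ≤ ℓ, and let A_j denote the number of vectors of Hamming weight j in the coset C_{i-1} \ C_i. Then for every w with 0 ≤ w ≤ ℓ, E_{i,w} ≤ min( ∑_{j=0}^{w} binom(ℓ-j, w-j)·A_j , binom(ℓ, w) ). -/
section Aux

open Finset

variable {ℓ : ℕ}

lemma mem_kernelCode_iff (K : Matrix (Fin ℓ) (Fin ℓ) (ZMod 2)) (m : ℕ)
    (c : Fin ℓ → ZMod 2) :
    c ∈ kernelCode K m ↔ ∃ u : Fin ℓ → ZMod 2,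
      (∀ r : Fin ℓ, (r : ℕ) < m → u r = 0) ∧ Matrix.vecMul u K = c := by
  constructor
  · intro hc
    induction hc using Submodule.span_induction with
    | mem x hx =>
        obtain ⟨r, hr, rfl⟩ := hx
        refine ⟨Pi.single r 1, ?_, ?_⟩
        · intro r' hr'
          rw [Pi.single_apply, if_neg]
          rintro rfl; omega
        · funext j
          simp only [Matrix.vecMul, dotProduct]
          rw [Finset.sum_eq_single r]
          · simp
          · intro b _ hb; simp [Pi.single_apply, hb]
          · simp
    | zero => exact ⟨0, fun _ _ => rfl, Matrix.zero_vecMul K⟩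
    | add x y hx hy ihx ihy =>
        obtain ⟨u, hu, rfl⟩ := ihx; obtain ⟨v, hv, rfl⟩ := ihy
        exact ⟨u + v, fun r hr => by simp [hu r hr, hv r hr],
          Matrix.add_vecMul K u v⟩
    | smul a x hx ih =>
        obtain ⟨u, hu, rfl⟩ := ih
        exact ⟨a • u, fun r hr => by simp [hu r hr], Matrix.smul_vecMul a u K⟩
  · rintro ⟨u, hu, rfl⟩
    have h : Matrix.vecMul u K = ∑ r, u r • K r := by
      funext j
      simp [Matrix.vecMul, dotProduct, Finset.sum_apply]
    rw [h]
    refine Submodule.sum_mem _ fun r _ => ?_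
    by_cases hr : m ≤ (r : ℕ)
    · exact Submodule.smul_mem _ _ (Submodule.subset_span ⟨r, hr, rfl⟩)
    · rw [hu r (by omega)]; simp

lemma vecMul_injective' (K : Matrix (Fin ℓ) (Fin ℓ) (ZMod 2)) (hK : IsUnit K.det)
    {u v : Fin ℓ → ZMod 2} (h : Matrix.vecMul u K = Matrix.vecMul v K) : u = v := by
  have h2 := congrArg (fun x => Matrix.vecMul x K⁻¹) h
  simpa [Matrix.vecMul_vecMul, Matrix.mul_nonsing_inv K hK, Matrix.vecMul_one] using h2

lemma eq_of_supp_eq {e e' : Fin ℓ → ZMod 2}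
    (h : ∀ k, e k ≠ 0 ↔ e' k ≠ 0) : e = e' := by
  funext k
  have h2 : ∀ a : ZMod 2, a = 0 ∨ a = 1 := by decide
  have hk := h k
  rcases h2 (e k) with h1 | h1 <;> rcases h2 (e' k) with h3 | h3 <;> simp_all

lemma nat_card_subtype {α : Type*} [Fintype α] (p : α → Prop) [DecidablePred p] :
    Nat.card {x // p x} = (Finset.univ.filter p).card := by
  simp [Nat.card_eq_fintype_card, Fintype.card_subtype]

lemma count_wt_le (w : ℕ) :
    ((Finset.univ : Finset (Fin ℓ → ZMod 2)).filter fun e => wt e = w).card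
      ≤ ℓ.choose w := by
  classical
  have hmaps : ∀ e ∈ (Finset.univ : Finset (Fin ℓ → ZMod 2)).filter fun e => wt e = w,
      (Finset.univ.filter fun k => e k ≠ 0) ∈
        Finset.powersetCard w (Finset.univ : Finset (Fin ℓ)) := by
    intro e he
    rw [Finset.mem_powersetCard]
    exact ⟨Finset.subset_univ _, (Finset.mem_filter.mp he).2⟩
  have hinj : ∀ e ∈ ((Finset.univ : Finset (Fin ℓ → ZMod 2)).filter fun e => wt e = w : Finset _),
      ∀ e' ∈ ((Finset.univ : Finset (Fin ℓ → ZMod 2)).filter fun e => wt e = w : Finset _),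
      (Finset.univ.filter fun k => e k ≠ 0) = (Finset.univ.filter fun k => e' k ≠ 0) →
      e = e' := by
    intro e _ e' _ hee
    apply eq_of_supp_eq
    intro k
    constructor
    · intro hk
      have h1 : k ∈ Finset.univ.filter fun k => e k ≠ 0 := by simp [hk]
      rw [hee] at h1
      simpa using h1
    · intro hk
      have h1 : k ∈ Finset.univ.filter fun k => e' k ≠ 0 := by simp [hk]
      rw [← hee] at h1
      simpa using h1
  have := Finset.card_le_card_of_injOn _ hmaps (fun e he e' he' h => hinj e he e' he' h)
  refine this.trans ?_
  rw [Finset.card_powersetCard, Finset.card_univ, Fintype.card_fin]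

lemma cover_card_le (w : ℕ) (c : Fin ℓ → ZMod 2) :
    ((Finset.univ : Finset (Fin ℓ → ZMod 2)).filter fun e =>
        wt e = w ∧ ∀ k, e k = 0 → c k = 0).card ≤ (ℓ - wt c).choose (w - wt c) := by
  classical
  set src := (Finset.univ : Finset (Fin ℓ → ZMod 2)).filter fun e =>
      wt e = w ∧ ∀ k, e k = 0 → c k = 0 with hsrc
  have hmaps : ∀ e ∈ src, (Finset.univ.filter fun k => e k ≠ 0 ∧ c k = 0) ∈
      Finset.powersetCard (w - wt c) (Finset.univ.filter fun k => c k = 0) := by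
    intro e he
    rw [hsrc, Finset.mem_filter] at he
    obtain ⟨-, hwt, hcov⟩ := he
    rw [Finset.mem_powersetCard]
    constructor
    · intro k hk
      rw [Finset.mem_filter] at hk ⊢
      exact ⟨hk.1, hk.2.2⟩
    · have hsub : (Finset.univ.filter fun k => c k ≠ 0) ⊆
          (Finset.univ.filter fun k => e k ≠ 0) := by
        intro k hk
        rw [Finset.mem_filter] at hk ⊢
        exact ⟨hk.1, fun h0 => hk.2 (hcov k h0)⟩
      have heq : (Finset.univ.filter fun k => e k ≠ 0 ∧ c k = 0)
          = (Finset.univ.filter fun k => e k ≠ 0) \ (Finset.univ.filter fun k => c k ≠ 0) := by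
        ext k
        simp only [Finset.mem_filter, Finset.mem_sdiff, Finset.mem_univ, true_and, not_not]
      rw [heq, Finset.card_sdiff_of_subset hsub]
      have h1 : (Finset.univ.filter fun k => e k ≠ 0).card = wt e := rfl
      have h2 : (Finset.univ.filter fun k => c k ≠ 0).card = wt c := rfl
      rw [h1, h2, hwt]
  have hinj : ∀ e ∈ src, ∀ e' ∈ src,
      (Finset.univ.filter fun k => e k ≠ 0 ∧ c k = 0)
        = (Finset.univ.filter fun k => e' k ≠ 0 ∧ c k = 0) → e = e' := by
    intro e he e' he' hee
    rw [hsrc, Finset.mem_filter] at he he'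
    apply eq_of_supp_eq
    intro k
    have hmem : ∀ x : Fin ℓ → ZMod 2, (∀ j, x j = 0 → c j = 0) →
        (x k ≠ 0 ↔ k ∈ Finset.univ.filter (fun j => x j ≠ 0 ∧ c j = 0) ∨ c k ≠ 0) := by
      intro x hx
      simp only [Finset.mem_filter, Finset.mem_univ, true_and]
      constructor
      · intro h
        by_cases hc : c k = 0
        · exact Or.inl ⟨h, hc⟩
        · exact Or.inr hc
      · rintro (⟨h, -⟩ | h)
        · exact h
        · intro h0; exact h (hx k h0)
    rw [hmem e he.2.2, hmem e' he'.2.2, hee]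
  have := Finset.card_le_card_of_injOn _ hmaps (fun e he e' he' h => hinj e he e' he' h)
  refine this.trans ?_
  rw [Finset.card_powersetCard]
  have hcard : (Finset.univ.filter fun k => c k = 0).card = ℓ - wt c := by
    have h1 := Finset.card_filter_add_card_filter_not
      (s := (Finset.univ : Finset (Fin ℓ))) (p := fun k => c k = 0)
    have h2 : (Finset.univ.filter fun k => ¬ c k = 0).card = wt c := rfl
    have h3 : (Finset.univ : Finset (Fin ℓ)).card = ℓ := by
      rw [Finset.card_univ, Fintype.card_fin]
    omega
  rw [hcard]

end Aux

/-- Upper bound on `E_{i,w}` in terms of the weight enumerator of the coset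
`C_{i-1} \ C_i`. -/
theorem Ecount_upper_bound {ℓ : ℕ} (hℓ : 0 < ℓ)
    (K : Matrix (Fin ℓ) (Fin ℓ) (ZMod 2)) (hK : IsUnit K.det)
    (i : Fin ℓ) (A : ℕ → ℕ)
    (hA : ∀ j, A j = Nat.card {c : Fin ℓ → ZMod 2 // c ∈ kernelCode K (i : ℕ) ∧
      c ∉ kernelCode K ((i : ℕ) + 1) ∧ wt c = j})
    (w : ℕ) (hw : w ≤ ℓ) :
    Ecount K i w ≤
      min (∑ j ∈ Finset.range (w + 1), (ℓ - j).choose (w - j) * A j) (ℓ.choose w) := by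
  classical
  have hE : Ecount K i w =
      ((Finset.univ : Finset (Fin ℓ → ZMod 2)).filter fun e =>
        Uncorrectable K i e ∧ wt e = w).card := nat_card_subtype _
  set SE := (Finset.univ : Finset (Fin ℓ → ZMod 2)).filter fun e =>
      Uncorrectable K i e ∧ wt e = w with hSE
  have hb2 : SE.card ≤ ℓ.choose w := by
    refine le_trans (Finset.card_le_card ?_) (count_wt_le w)
    intro e he
    rw [Finset.mem_filter] at he ⊢
    exact ⟨he.1, he.2.2⟩
  -- main bound
  have hchoice : ∀ e : Fin ℓ → ZMod 2, e ∈ SE → ∃ c : Fin ℓ → ZMod 2,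
      c ∈ kernelCode K (i : ℕ) ∧ c ∉ kernelCode K ((i : ℕ) + 1) ∧
        ∀ k, e k = 0 → c k = 0 := by
    intro e he
    rw [hSE, Finset.mem_filter] at he
    obtain ⟨u', u'', h1, h2, h3⟩ := he.2.1
    refine ⟨Matrix.vecMul (u' - u'') K, ?_, ?_, ?_⟩
    · refine (mem_kernelCode_iff K _ _).mpr ⟨u' - u'', fun r hr => ?_, rfl⟩
      have := h1 r hr
      simp [this]
    · intro hmem
      obtain ⟨v, hv, hveq⟩ := (mem_kernelCode_iff K _ _).mp hmem
      have hvu : v = u' - u'' := vecMul_injective' K hK hveq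
      have hvi : v i = 0 := hv i (by omega)
      have hne : (u' - u'') i ≠ 0 := sub_ne_zero.mpr h2
      rw [hvu] at hvi
      exact hne hvi
    · intro k hk
      have hs : Matrix.vecMul (u' - u'') K = Matrix.vecMul u' K - Matrix.vecMul u'' K :=
        Matrix.sub_vecMul K u' u''
      rw [hs]
      have := h3 k hk
      simp [this]
  choose! cfun hc1 hc2 hc3 using hchoice
  set coset := (Finset.univ : Finset (Fin ℓ → ZMod 2)).filter fun c =>
      c ∈ kernelCode K (i : ℕ) ∧ c ∉ kernelCode K ((i : ℕ) + 1) ∧ wt c ≤ w with hcoset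
  set P := (Finset.univ : Finset ((Fin ℓ → ZMod 2) × (Fin ℓ → ZMod 2))).filter fun p =>
      (p.1 ∈ kernelCode K (i : ℕ) ∧ p.1 ∉ kernelCode K ((i : ℕ) + 1) ∧ wt p.1 ≤ w) ∧
        wt p.2 = w ∧ ∀ k, p.2 k = 0 → p.1 k = 0 with hP
  have step1 : SE.card ≤ P.card := by
    apply Finset.card_le_card_of_injOn (fun e => (cfun e, e))
    · intro e he
      have hwte : wt e = w := by
        rw [hSE, Finset.mem_coe, Finset.mem_filter] at he
        exact he.2.2
      rw [hP, Finset.mem_coe, Finset.mem_filter]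
      refine ⟨Finset.mem_univ _, ⟨hc1 e he, hc2 e he, ?_⟩, hwte, hc3 e he⟩
      rw [← hwte]
      show wt (cfun e) ≤ wt e
      apply Finset.card_le_card
      intro k hk
      rw [Finset.mem_filter] at hk ⊢
      refine ⟨hk.1, fun h0 => hk.2 (hc3 e he k h0)⟩
    · intro e _ e' _ h
      exact congrArg Prod.snd h
  have hmaps : ∀ p ∈ P, p.1 ∈ coset := by
    intro p hp
    rw [hP, Finset.mem_filter] at hp
    rw [hcoset, Finset.mem_filter]
    exact ⟨Finset.mem_univ _, hp.2.1⟩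
  have step2 : P.card ≤ ∑ c ∈ coset, (ℓ - wt c).choose (w - wt c) := by
    rw [Finset.card_eq_sum_card_fiberwise hmaps]
    refine Finset.sum_le_sum fun c hc => ?_
    have hfib : (P.filter fun p => p.1 = c).card ≤
        ((Finset.univ : Finset (Fin ℓ → ZMod 2)).filter fun e =>
          wt e = w ∧ ∀ k, e k = 0 → c k = 0).card := by
      apply Finset.card_le_card_of_injOn (fun p => p.2)
      · intro p hp
        rw [Finset.mem_coe, Finset.mem_filter] at hp
        obtain ⟨hp1, hp2⟩ := hp
        rw [hP, Finset.mem_filter] at hp1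
        rw [Finset.mem_coe, Finset.mem_filter]
        refine ⟨Finset.mem_univ _, hp1.2.2.1, ?_⟩
        rw [← hp2]
        exact hp1.2.2.2
      · intro p hp q hq h
        rw [Finset.mem_coe, Finset.mem_filter] at hp hq
        exact Prod.ext (hp.2.trans hq.2.symm) h
    exact hfib.trans (cover_card_le w c)
  have step3 : ∑ c ∈ coset, (ℓ - wt c).choose (w - wt c) ≤
      ∑ j ∈ Finset.range (w + 1), (ℓ - j).choose (w - j) * A j := by
    have hmaps2 : ∀ c ∈ coset, wt c ∈ Finset.range (w + 1) := by
      intro c hc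
      rw [hcoset, Finset.mem_filter] at hc
      rw [Finset.mem_range]
      omega
    rw [← Finset.sum_fiberwise_of_maps_to hmaps2
      (fun c => (ℓ - wt c).choose (w - wt c))]
    refine Finset.sum_le_sum fun j hj => ?_
    have hinner : ∑ c ∈ coset.filter (fun c => wt c = j), (ℓ - wt c).choose (w - wt c)
        = (coset.filter fun c => wt c = j).card * (ℓ - j).choose (w - j) := by
      rw [Finset.sum_congr rfl (fun c hc => by
        rw [(Finset.mem_filter.mp hc).2]), Finset.sum_const, smul_eq_mul]
    rw [hinner, mul_comm]
    refine Nat.mul_le_mul_left _ ?_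
    rw [hA j, nat_card_subtype]
    apply Finset.card_le_card
    intro c hc
    rw [Finset.mem_filter] at hc
    obtain ⟨hc1', hc2'⟩ := hc
    rw [hcoset, Finset.mem_filter] at hc1'
    rw [Finset.mem_filter]
    exact ⟨Finset.mem_univ _, hc1'.2.1, hc1'.2.2.1, hc2'⟩
  rw [hE]
  exact le_min (le_trans step1 (le_trans step2 step3)) hb2
end
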